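/- Let Φ : ℝ → ℂ^{N_g × N} and P : ℝ → ℂ^{N_g × N_g} be three times differentiable, and assume for all t: P(t) Φ(t) = Φ(t), P(t) Φ'(t) = 0, and ‖Φ(t)‖ ≤ 1 in the operator norm. Then for all t: ‖Φ'(t)‖ ≤ ‖P'(t)‖; ‖Φ''(t)‖ ≤ ‖P''(t)‖ + ‖P'(t)‖²; and ‖Φ'''(t)‖ ≤ ‖P'''(t)‖ + 3 ‖P''(t)‖ ‖P'(t)‖ + ‖P'(t)‖³. -/

import Mathlib

open Matrix
open scoped Matrix.Norms.L2Operator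

/-- Matrix multiplication as a continuous bilinear map over ℝ (L2 operator norm). -/
noncomputable def ptMulCLM (Ng N : ℕ) :
    Matrix (Fin Ng) (Fin Ng) ℂ →L[ℝ] Matrix (Fin Ng) (Fin N) ℂ →L[ℝ] Matrix (Fin Ng) (Fin N) ℂ :=
  LinearMap.mkContinuous₂
    (LinearMap.mk₂ ℝ (· * ·) Matrix.add_mul (fun c A B => by simp [Matrix.smul_mul])
      Matrix.mul_add (fun c A B => by simp [Matrix.mul_smul]))
    1 (fun A B => by simpa using Matrix.l2_opNorm_mul A B)

@[simp] lemma ptMulCLM_apply {Ng N : ℕ} (A : Matrix (Fin Ng) (Fin Ng) ℂ)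
    (B : Matrix (Fin Ng) (Fin N) ℂ) : ptMulCLM Ng N A B = A * B := rfl

lemma pt_hasDerivAt_matmul {Ng N : ℕ} (A : ℝ → Matrix (Fin Ng) (Fin Ng) ℂ)
    (X : ℝ → Matrix (Fin Ng) (Fin N) ℂ) (hA : Differentiable ℝ A)
    (hX : Differentiable ℝ X) (t : ℝ) :
    HasDerivAt (fun s => A s * X s) (deriv A t * X t + A t * deriv X t) t := by
  have h1 : HasDerivAt (fun s => ptMulCLM Ng N (A s)) (ptMulCLM Ng N (deriv A t)) t :=
    by
      have := (ptMulCLM Ng N).hasFDerivAt (x := A t)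
      have h2 := (hA t).hasDerivAt
      exact HasFDerivAt.comp_hasDerivAt (l := ptMulCLM Ng N) t this h2
  simpa using h1.clm_apply (hX t).hasDerivAt

lemma pt_deriv_matmul {Ng N : ℕ} (A : ℝ → Matrix (Fin Ng) (Fin Ng) ℂ)
    (X : ℝ → Matrix (Fin Ng) (Fin N) ℂ) (hA : Differentiable ℝ A)
    (hX : Differentiable ℝ X) (t : ℝ) :
    deriv (fun s => A s * X s) t = deriv A t * X t + A t * deriv X t :=
  (pt_hasDerivAt_matmul A X hA hX t).deriv

set_option maxHeartbeats 1000000 in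
theorem pt_wavefunction_derivative_bounds
    (Ng N : ℕ)
    (Φ : ℝ → Matrix (Fin Ng) (Fin N) ℂ)
    (P : ℝ → Matrix (Fin Ng) (Fin Ng) ℂ)
    (hΦ : Differentiable ℝ Φ) (hΦ' : Differentiable ℝ (deriv Φ))
    (hΦ'' : Differentiable ℝ (deriv (deriv Φ)))
    (hP : Differentiable ℝ P) (hP' : Differentiable ℝ (deriv P))
    (hP'' : Differentiable ℝ (deriv (deriv P)))
    (hrange : ∀ t, P t * Φ t = Φ t)
    (hpt : ∀ t, P t * deriv Φ t = 0)
    (hnorm : ∀ t, ‖Φ t‖ ≤ 1) :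
    ∀ t, ‖deriv Φ t‖ ≤ ‖deriv P t‖ ∧
      ‖deriv (deriv Φ) t‖ ≤ ‖deriv (deriv P) t‖ + ‖deriv P t‖ ^ 2 ∧
      ‖deriv (deriv (deriv Φ)) t‖ ≤
        ‖deriv (deriv (deriv P)) t‖ + 3 * (‖deriv (deriv P) t‖ * ‖deriv P t‖)
          + ‖deriv P t‖ ^ 3 := by
  intro t
  -- First derivative identity: Φ' = P' Φ
  have key1 : ∀ s, deriv Φ s = deriv P s * Φ s := by
    intro s
    have h : deriv Φ s = deriv (fun u => P u * Φ u) s := by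
      congr 1; funext u; exact (hrange u).symm
    rw [h, pt_deriv_matmul P Φ hP hΦ, hpt s, add_zero]
  -- Second derivative identity: Φ'' = P'' Φ + P' Φ'
  have key2 : ∀ s, deriv (deriv Φ) s = deriv (deriv P) s * Φ s + deriv P s * deriv Φ s := by
    intro s
    have h : deriv (deriv Φ) s = deriv (fun u => deriv P u * Φ u) s := by
      congr 1; funext u; exact key1 u
    rw [h, pt_deriv_matmul (deriv P) Φ hP' hΦ]
  -- Third derivative identity
  have key3 : deriv (deriv (deriv Φ)) t =
      (deriv (deriv (deriv P)) t * Φ t + deriv (deriv P) t * deriv Φ t)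
        + (deriv (deriv P) t * deriv Φ t + deriv P t * deriv (deriv Φ) t) := by
    have h : deriv (deriv (deriv Φ)) t =
        deriv (fun u => deriv (deriv P) u * Φ u + deriv P u * deriv Φ u) t := by
      congr 1; funext u; exact key2 u
    have h1 := pt_hasDerivAt_matmul (deriv (deriv P)) Φ hP'' hΦ t
    have h2 := pt_hasDerivAt_matmul (deriv P) (deriv Φ) hP' hΦ' t
    rw [h]; exact (h1.add h2).deriv
  -- Norm bounds
  have mulb : ∀ {k : ℕ} (A : Matrix (Fin Ng) (Fin Ng) ℂ) (B : Matrix (Fin Ng) (Fin N) ℂ),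
      ‖A * B‖ ≤ ‖A‖ * ‖B‖ := fun A B => Matrix.l2_opNorm_mul A B
  have hP1 : (0:ℝ) ≤ ‖deriv P t‖ := norm_nonneg _
  have hP2 : (0:ℝ) ≤ ‖deriv (deriv P) t‖ := norm_nonneg _
  have b1 : ‖deriv Φ t‖ ≤ ‖deriv P t‖ := by
    rw [key1 t]
    calc ‖deriv P t * Φ t‖ ≤ ‖deriv P t‖ * ‖Φ t‖ := Matrix.l2_opNorm_mul _ _
      _ ≤ ‖deriv P t‖ * 1 := by gcongr; exact hnorm t
      _ = ‖deriv P t‖ := mul_one _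
  have b2 : ‖deriv (deriv Φ) t‖ ≤ ‖deriv (deriv P) t‖ + ‖deriv P t‖ ^ 2 := by
    rw [key2 t]
    have hA : ‖deriv (deriv P) t * Φ t‖ ≤ ‖deriv (deriv P) t‖ := by
      calc ‖deriv (deriv P) t * Φ t‖ ≤ ‖deriv (deriv P) t‖ * ‖Φ t‖ := Matrix.l2_opNorm_mul _ _
        _ ≤ ‖deriv (deriv P) t‖ * 1 := by gcongr; exact hnorm t
        _ = _ := mul_one _
    have hB : ‖deriv P t * deriv Φ t‖ ≤ ‖deriv P t‖ ^ 2 := by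
      calc ‖deriv P t * deriv Φ t‖ ≤ ‖deriv P t‖ * ‖deriv Φ t‖ := Matrix.l2_opNorm_mul _ _
        _ ≤ ‖deriv P t‖ * ‖deriv P t‖ := by gcongr
        _ = ‖deriv P t‖ ^ 2 := (sq _).symm
    calc ‖deriv (deriv P) t * Φ t + deriv P t * deriv Φ t‖
        ≤ ‖deriv (deriv P) t * Φ t‖ + ‖deriv P t * deriv Φ t‖ := norm_add_le _ _
      _ ≤ _ := add_le_add hA hB
  refine ⟨b1, b2, ?_⟩
  rw [key3]
  have hA : ‖deriv (deriv (deriv P)) t * Φ t‖ ≤ ‖deriv (deriv (deriv P)) t‖ := by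
    calc ‖deriv (deriv (deriv P)) t * Φ t‖ ≤ ‖deriv (deriv (deriv P)) t‖ * ‖Φ t‖ :=
        Matrix.l2_opNorm_mul _ _
      _ ≤ ‖deriv (deriv (deriv P)) t‖ * 1 := by gcongr; exact hnorm t
      _ = _ := mul_one _
  have hB : ‖deriv (deriv P) t * deriv Φ t‖ ≤ ‖deriv (deriv P) t‖ * ‖deriv P t‖ := by
    calc ‖deriv (deriv P) t * deriv Φ t‖ ≤ ‖deriv (deriv P) t‖ * ‖deriv Φ t‖ :=
        Matrix.l2_opNorm_mul _ _
      _ ≤ _ := by gcongr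
  have hC : ‖deriv P t * deriv (deriv Φ) t‖ ≤
      ‖deriv P t‖ * (‖deriv (deriv P) t‖ + ‖deriv P t‖ ^ 2) := by
    calc ‖deriv P t * deriv (deriv Φ) t‖ ≤ ‖deriv P t‖ * ‖deriv (deriv Φ) t‖ :=
        Matrix.l2_opNorm_mul _ _
      _ ≤ _ := by gcongr
  calc ‖(deriv (deriv (deriv P)) t * Φ t + deriv (deriv P) t * deriv Φ t)
        + (deriv (deriv P) t * deriv Φ t + deriv P t * deriv (deriv Φ) t)‖
      ≤ ‖deriv (deriv (deriv P)) t * Φ t + deriv (deriv P) t * deriv Φ t‖ +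
        ‖deriv (deriv P) t * deriv Φ t + deriv P t * deriv (deriv Φ) t‖ := norm_add_le _ _
    _ ≤ (‖deriv (deriv (deriv P)) t * Φ t‖ + ‖deriv (deriv P) t * deriv Φ t‖) +
        (‖deriv (deriv P) t * deriv Φ t‖ + ‖deriv P t * deriv (deriv Φ) t‖) :=
        add_le_add (norm_add_le _ _) (norm_add_le _ _)
    _ ≤ (‖deriv (deriv (deriv P)) t‖ + ‖deriv (deriv P) t‖ * ‖deriv P t‖) +
        (‖deriv (deriv P) t‖ * ‖deriv P t‖ +
          ‖deriv P t‖ * (‖deriv (deriv P) t‖ + ‖deriv P t‖ ^ 2)) := by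
        exact add_le_add (add_le_add hA hB) (add_le_add hB hC)
    _ = _ := by ring
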